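/- Let F be a class of non-negative measurable functions on 𝒳, X, X_1, …, X_n i.i.d. 𝒳-valued random variables with sup_{f∈F} Var(f(X)) ≤ v, α > 0 with α²v ≤ 1, δ ∈ (0,1), and set A_α(δ) = αv + 2log(1/δ)/(nα) and μ_0 = m_{f*} + A_α(δ). On the event that |μ̂_{f*} − m_{f*}| ≤ A_α(δ), the following three inequalities hold: (1) r̂_{f̂}(μ_0) ≤ 0; (2) r̄_{f*}(μ_0) ≤ 0; (3) −r̂_{f*}(μ_0) ≤ 2 A_α(δ). -/

import Mathlib

open MeasureTheory ProbabilityTheory Real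

noncomputable section

/-- Catoni's truncation function `φ`. -/
def catoniPhi (x : ℝ) : ℝ :=
  if x < 0 then -Real.log (1 - x + x ^ 2 / 2) else Real.log (1 + x + x ^ 2 / 2)

/-- Catoni's empirical criterion `r̂_f(μ)` based on the sample `Xs`. -/
def rhat {Ω 𝒳 : Type*} (n : ℕ) (α : ℝ) (Xs : Fin n → Ω → 𝒳)
    (f : 𝒳 → ℝ) (μ : ℝ) (ω : Ω) : ℝ :=
  (1 / (n * α)) * ∑ l, catoniPhi (α * (f (Xs l ω) - μ))

/-- The deterministic counterpart `r̄_f(μ)` of Catoni's criterion. -/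
def rbar {Ω 𝒳 : Type*} [MeasurableSpace Ω] (P : Measure Ω)
    (α : ℝ) (X : Ω → 𝒳) (f : 𝒳 → ℝ) (μ : ℝ) : ℝ :=
  (1 / α) * ∫ ω, catoniPhi (α * (f (X ω) - μ)) ∂P


lemma quadP_pos (x : ℝ) : 0 < 1 + x + x ^ 2 / 2 := by nlinarith [sq_nonneg (x + 1)]
lemma quadN_pos (x : ℝ) : 0 < 1 - x + x ^ 2 / 2 := by nlinarith [sq_nonneg (x - 1)]

lemma catoniPhi_le_log (x : ℝ) : catoniPhi x ≤ Real.log (1 + x + x ^ 2 / 2) := by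
  unfold catoniPhi
  split_ifs with h
  · have hab : 1 ≤ (1 - x + x ^ 2 / 2) * (1 + x + x ^ 2 / 2) := by nlinarith [sq_nonneg (x ^ 2)]
    have h0 := Real.log_nonneg hab
    rw [Real.log_mul (ne_of_gt (quadN_pos x)) (ne_of_gt (quadP_pos x))] at h0
    linarith
  · exact le_rfl

lemma catoniPhi_le_lin (x : ℝ) : catoniPhi x ≤ x + x ^ 2 / 2 := by
  have h1 := catoniPhi_le_log x
  have h2 := Real.log_le_sub_one_of_pos (quadP_pos x)
  linarith

lemma abs_catoniPhi_le (x : ℝ) : |catoniPhi x| ≤ |x| + x ^ 2 / 2 := by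
  unfold catoniPhi
  split_ifs with h
  · have h1 : 0 ≤ Real.log (1 - x + x ^ 2 / 2) := Real.log_nonneg (by nlinarith)
    rw [abs_neg, abs_of_nonneg h1, abs_of_neg h]
    have h2 := Real.log_le_sub_one_of_pos (quadN_pos x)
    linarith
  · push_neg at h
    have h1 : 0 ≤ Real.log (1 + x + x ^ 2 / 2) := Real.log_nonneg (by nlinarith)
    rw [abs_of_nonneg h1, abs_of_nonneg h]
    have h2 := Real.log_le_sub_one_of_pos (quadP_pos x)
    linarith

lemma catoniPhi_mono : Monotone catoniPhi := by
  intro a b hab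
  unfold catoniPhi
  split_ifs with ha hb hb
  · have h1 : 1 - b + b ^ 2 / 2 ≤ 1 - a + a ^ 2 / 2 := by nlinarith
    have := Real.log_le_log (quadN_pos b) h1
    linarith
  · have h1 : 0 ≤ Real.log (1 - a + a ^ 2 / 2) := Real.log_nonneg (by nlinarith)
    have h2 : 0 ≤ Real.log (1 + b + b ^ 2 / 2) := Real.log_nonneg (by push_neg at hb; nlinarith)
    linarith
  · linarith [ha, hb]
  · push_neg at ha
    exact Real.log_le_log (quadP_pos a) (by nlinarith)

lemma log_quad_le_self {x : ℝ} (hx : 0 ≤ x) : Real.log (1 + x + x ^ 2 / 2) ≤ x := by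
  rw [Real.log_le_iff_le_exp (quadP_pos x)]
  calc 1 + x + x ^ 2 / 2 = ∑ i ∈ Finset.range 3, x ^ i / (Nat.factorial i) := by
        rw [Finset.sum_range_succ, Finset.sum_range_succ, Finset.sum_range_one]
        norm_num [Nat.factorial]
    _ ≤ Real.exp x := Real.sum_le_exp_of_nonneg hx 3

lemma log_helper {A B t : ℝ} (hA : 0 < A) (hB : 0 < B) (ht : 0 ≤ t)
    (hBA : B ≤ A * (1 + t + t ^ 2 / 2)) : Real.log B - Real.log A ≤ t := by
  have h1 : Real.log B ≤ Real.log (A * (1 + t + t ^ 2 / 2)) := Real.log_le_log hB hBA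
  rw [Real.log_mul (ne_of_gt hA) (ne_of_gt (quadP_pos t))] at h1
  have h2 := log_quad_le_self ht
  linarith

lemma catoniPhi_lip {a b : ℝ} (hab : a ≤ b) : catoniPhi b - catoniPhi a ≤ b - a := by
  unfold catoniPhi
  split_ifs with hb ha ha
  · -- b < 0, a < 0
    have := log_helper (A := 1 - b + b ^ 2 / 2) (B := 1 - a + a ^ 2 / 2) (t := b - a)
      (quadN_pos b) (quadN_pos a) (by linarith)
      (by nlinarith [mul_nonneg (mul_nonneg (neg_nonneg.2 hb.le) (sub_nonneg.2 hab)) (sub_nonneg.2 hab),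
            mul_nonneg (mul_nonneg (sq_nonneg b) (sub_nonneg.2 hab)) (sub_nonneg.2 hab),
            mul_nonneg (sq_nonneg b) (sub_nonneg.2 hab)])
    linarith
  · -- b < 0, ¬a < 0 : contradiction
    push_neg at ha; linarith
  · -- ¬b < 0, a < 0
    push_neg at hb
    have h1 := log_quad_le_self hb
    have h2 := log_quad_le_self (x := -a) (by linarith)
    have h3 : (1 : ℝ) + -a + (-a) ^ 2 / 2 = 1 - a + a ^ 2 / 2 := by ring
    rw [h3] at h2
    linarith
  · -- both ≥ 0
    push_neg at ha hb
    have := log_helper (A := 1 + a + a ^ 2 / 2) (B := 1 + b + b ^ 2 / 2) (t := b - a)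
      (quadP_pos a) (quadP_pos b) (by linarith)
      (by nlinarith [mul_nonneg (mul_nonneg ha (sub_nonneg.2 hab)) (sub_nonneg.2 hab),
            mul_nonneg (mul_nonneg (sq_nonneg a) (sub_nonneg.2 hab)) (sub_nonneg.2 hab),
            mul_nonneg (sq_nonneg a) (sub_nonneg.2 hab)])
    linarith

lemma catoniPhi_measurable : Measurable catoniPhi := by
  unfold catoniPhi
  apply Measurable.ite (measurableSet_lt measurable_id measurable_const)
  · exact (Real.measurable_log.comp ((measurable_const.sub measurable_id).add ((measurable_id.pow_const 2).div_const 2))).neg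
  · exact Real.measurable_log.comp ((measurable_const.add measurable_id).add ((measurable_id.pow_const 2).div_const 2))

set_option maxHeartbeats 1000000 in
/-- Lemma 3.2: on the event `|μ̂_{f*} - m_{f*}| ≤ A_α(δ)`, with `μ₀ = m_{f*} + A_α(δ)`,
one has `r̂_{f̂}(μ₀) ≤ 0`, `r̄_{f*}(μ₀) ≤ 0` and `-r̂_{f*}(μ₀) ≤ 2 A_α(δ)`. -/
theorem stmt_5 {Ω 𝒳 ι : Type*} [MeasurableSpace Ω] [MeasurableSpace 𝒳]
    (P : Measure Ω) [IsProbabilityMeasure P]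
    (n : ℕ) (hn : 0 < n) (X : Ω → 𝒳) (Xs : Fin n → Ω → 𝒳)
    (hXm : Measurable X) (hXsm : ∀ l, Measurable (Xs l))
    (hindep : iIndepFun Xs P)
    (hident : ∀ l, Measure.map (Xs l) P = Measure.map X P)
    (f : ι → 𝒳 → ℝ) (hfm : ∀ i, Measurable (f i)) (hf0 : ∀ i x, 0 ≤ f i x)
    (hfL2 : ∀ i, MemLp (fun ω => f i (X ω)) 2 P)
    (v : ℝ) (hv : 0 < v) (hvar : ∀ i, variance (fun ω => f i (X ω)) P ≤ v)
    (α : ℝ) (hα : 0 < α) (hαv : α ^ 2 * v ≤ 1)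
    (δ : ℝ) (hδ : δ ∈ Set.Ioo (0 : ℝ) 1)
    (muHat : ι → Ω → ℝ) (hroot : ∀ i ω, rhat n α Xs (f i) (muHat i ω) ω = 0)
    (fhat : Ω → ι) (hminhat : ∀ ω i, muHat (fhat ω) ω ≤ muHat i ω)
    (istar : ι) (histar : ∀ i, ∫ ω, f istar (X ω) ∂P ≤ ∫ ω, f i (X ω) ∂P)
    (ω : Ω)
    (hevent : |muHat istar ω - ∫ ω', f istar (X ω') ∂P| ≤
      α * v + 2 * Real.log (1 / δ) / (n * α)) :
    rhat n α Xs (f (fhat ω))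
        ((∫ ω', f istar (X ω') ∂P) + (α * v + 2 * Real.log (1 / δ) / (n * α))) ω ≤ 0 ∧
    rbar P α X (f istar)
        ((∫ ω', f istar (X ω') ∂P) + (α * v + 2 * Real.log (1 / δ) / (n * α))) ≤ 0 ∧
    -(rhat n α Xs (f istar)
        ((∫ ω', f istar (X ω') ∂P) + (α * v + 2 * Real.log (1 / δ) / (n * α))) ω) ≤
      2 * (α * v + 2 * Real.log (1 / δ) / (n * α)) := by
  obtain ⟨hδ0, hδ1⟩ := hδ
  set m : ℝ := ∫ ω', f istar (X ω') ∂P with hm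
  set A : ℝ := α * v + 2 * Real.log (1 / δ) / (n * α) with hA
  have hn' : (0 : ℝ) < n := Nat.cast_pos.mpr hn
  have hlog : 0 < Real.log (1 / δ) := Real.log_pos (one_lt_one_div hδ0 hδ1)
  have hAv : α * v ≤ A := by
    rw [hA]
    have h0 : 0 ≤ 2 * Real.log (1 / δ) / (n * α) := by positivity
    linarith
  have hA0 : 0 < A := by nlinarith
  clear_value m A
  rw [abs_le] at hevent
  obtain ⟨he1, he2⟩ := hevent
  -- monotonicity of rhat in μ
  have hmono_rhat : ∀ i (μ μ' : ℝ), μ ≤ μ' →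
      rhat n α Xs (f i) μ' ω ≤ rhat n α Xs (f i) μ ω := by
    intro i μ μ' h
    unfold rhat
    apply mul_le_mul_of_nonneg_left _ (by positivity)
    apply Finset.sum_le_sum
    intro l _
    exact catoniPhi_mono (by nlinarith)
  have hμhat_le : muHat istar ω ≤ m + A := by linarith
  -- Part 1
  have part1 : rhat n α Xs (f (fhat ω)) (m + A) ω ≤ 0 := by
    have h1 : muHat (fhat ω) ω ≤ m + A := le_trans (hminhat ω istar) hμhat_le
    calc rhat n α Xs (f (fhat ω)) (m + A) ω
        ≤ rhat n α Xs (f (fhat ω)) (muHat (fhat ω) ω) ω := hmono_rhat _ _ _ h1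
      _ = 0 := hroot _ ω
  -- Part 3
  have part3 : -(rhat n α Xs (f istar) (m + A) ω) ≤ 2 * A := by
    set μh := muHat istar ω with hμh
    have hkey : rhat n α Xs (f istar) μh ω - rhat n α Xs (f istar) (m + A) ω
        ≤ (m + A) - μh := by
      unfold rhat
      rw [← mul_sub, ← Finset.sum_sub_distrib]
      have hsum : ∑ l : Fin n, (catoniPhi (α * (f istar (Xs l ω) - μh))
            - catoniPhi (α * (f istar (Xs l ω) - (m + A))))
          ≤ ∑ _l : Fin n, α * ((m + A) - μh) := by
        apply Finset.sum_le_sum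
        intro l _
        have h := catoniPhi_lip (a := α * (f istar (Xs l ω) - (m + A)))
          (b := α * (f istar (Xs l ω) - μh)) (by nlinarith)
        nlinarith [h]
      have hsum2 : (∑ _l : Fin n, α * ((m + A) - μh)) = n * (α * ((m + A) - μh)) := by
        rw [Finset.sum_const, Finset.card_univ, Fintype.card_fin, nsmul_eq_mul]
      calc (1 / (n * α)) * ∑ l : Fin n, (catoniPhi (α * (f istar (Xs l ω) - μh))
            - catoniPhi (α * (f istar (Xs l ω) - (m + A))))
          ≤ (1 / (n * α)) * (n * (α * ((m + A) - μh))) := by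
            rw [← hsum2]
            exact mul_le_mul_of_nonneg_left hsum (by positivity)
        _ = (m + A) - μh := by field_simp
    have h0 : rhat n α Xs (f istar) μh ω = 0 := hroot istar ω
    have : (m + A) - μh ≤ 2 * A := by rw [hμh]; linarith
    linarith
  -- Part 2
  have hg2 : MemLp (fun ω' => f istar (X ω')) 2 P := hfL2 istar
  have hg1 : Integrable (fun ω' => f istar (X ω')) P := hg2.integrable one_le_two
  have hgmeas : Measurable (fun ω' => f istar (X ω')) := (hfm istar).comp hXm
  have hyint : Integrable (fun ω' => f istar (X ω') - m) P := hg1.sub (integrable_const m)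
  have hy2int : Integrable (fun ω' => (f istar (X ω') - m) ^ 2) P :=
    (hg2.sub (memLp_const m)).integrable_sq
  have hzero : ∫ ω', (f istar (X ω') - m) ∂P = 0 := by
    rw [integral_sub hg1 (integrable_const m), integral_const]
    simp [← hm]
  have hVar : ∫ ω', (f istar (X ω') - m) ^ 2 ∂P = variance (fun ω' => f istar (X ω')) P := by
    rw [variance_eq_integral (hfL2 istar).aemeasurable, ← hm]
  have hvv : variance (fun ω' => f istar (X ω')) P ≤ v := hvar istar
  -- constants
  have hpt : ∀ ω', catoniPhi (α * (f istar (X ω') - (m + A)))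
      ≤ (α ^ 2 / 2) * (f istar (X ω') - m) ^ 2
        + ((α - α ^ 2 * (α * v)) * (f istar (X ω') - m)
          + (-(α * (α * v)) + α ^ 2 * (α * v) ^ 2 / 2)) := by
    intro ω'
    have h1 : catoniPhi (α * (f istar (X ω') - (m + A)))
        ≤ catoniPhi (α * (f istar (X ω') - (m + α * v))) :=
      catoniPhi_mono (by nlinarith)
    have h2 := catoniPhi_le_lin (α * (f istar (X ω') - (m + α * v)))
    nlinarith [h1, h2]
  have hI1 : Integrable (fun ω' => (α ^ 2 / 2) * (f istar (X ω') - m) ^ 2) P := by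
    exact hy2int.const_mul _
  have hI2a : Integrable (fun ω' => (α - α ^ 2 * (α * v)) * (f istar (X ω') - m)) P := by
    exact hyint.const_mul _
  have hI2 : Integrable (fun ω' => (α - α ^ 2 * (α * v)) * (f istar (X ω') - m)
      + (-(α * (α * v)) + α ^ 2 * (α * v) ^ 2 / 2)) P := by
    exact hI2a.add (integrable_const _)
  have hbndint : Integrable (fun ω' => (α ^ 2 / 2) * (f istar (X ω') - m) ^ 2
      + ((α - α ^ 2 * (α * v)) * (f istar (X ω') - m)
        + (-(α * (α * v)) + α ^ 2 * (α * v) ^ 2 / 2))) P := by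
    exact hI1.add hI2
  have hsplit : ∫ ω', ((α ^ 2 / 2) * (f istar (X ω') - m) ^ 2
      + ((α - α ^ 2 * (α * v)) * (f istar (X ω') - m)
        + (-(α * (α * v)) + α ^ 2 * (α * v) ^ 2 / 2))) ∂P
      = (α ^ 2 / 2) * (∫ ω', (f istar (X ω') - m) ^ 2 ∂P)
        + ((α - α ^ 2 * (α * v)) * (∫ ω', (f istar (X ω') - m) ∂P)
          + (-(α * (α * v)) + α ^ 2 * (α * v) ^ 2 / 2)) := by
    rw [integral_add hI1 hI2, integral_add hI2a (integrable_const _),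
      integral_const_mul, integral_const_mul, integral_const]
    simp
  have hphiint : Integrable (fun ω' => catoniPhi (α * (f istar (X ω') - (m + A)))) P := by
    have hb : Integrable (fun ω' => |α * (f istar (X ω') - (m + A))|
        + (α * (f istar (X ω') - (m + A))) ^ 2 / 2) P := by
      apply Integrable.add
      · exact ((hg1.sub (integrable_const _)).const_mul α).abs
      · exact (((hfL2 istar).sub (memLp_const _)).const_mul α).integrable_sq.div_const 2
    apply Integrable.mono' hb
    · exact (catoniPhi_measurable.comp
        (measurable_const.mul (hgmeas.sub measurable_const))).aestronglyMeasurable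
    · refine ae_of_all _ fun ω' => ?_
      rw [Real.norm_eq_abs]
      exact abs_catoniPhi_le _
  have hIle : ∫ ω', catoniPhi (α * (f istar (X ω') - (m + A))) ∂P ≤ 0 := by
    have h1 := integral_mono hphiint hbndint hpt
    rw [hsplit, hVar, hzero] at h1
    have h2 : (α ^ 2 / 2) * variance (fun ω' => f istar (X ω')) P
        + ((α - α ^ 2 * (α * v)) * 0 + (-(α * (α * v)) + α ^ 2 * (α * v) ^ 2 / 2)) ≤ 0 := by
      have t1 : α ^ 2 * variance (fun ω' => f istar (X ω')) P ≤ α ^ 2 * v :=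
        mul_le_mul_of_nonneg_left hvv (sq_nonneg α)
      have t2 : (α ^ 2 * v) * (α ^ 2 * v) ≤ 1 * (α ^ 2 * v) :=
        mul_le_mul_of_nonneg_right hαv (by positivity)
      nlinarith [t1, t2]
    exact h1.trans h2
  have part2 : rbar P α X (f istar) (m + A) ≤ 0 := by
    unfold rbar
    calc (1 / α) * ∫ ω', catoniPhi (α * (f istar (X ω') - (m + A))) ∂P
        ≤ (1 / α) * 0 := mul_le_mul_of_nonneg_left hIle (by positivity)
      _ = 0 := by ring
  exact ⟨part1, part2, part3⟩
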